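/- Let T = (V,E) be a tree on d ≥ 3 vertices with edge correlations ρ : E → (−1,1)∖{0}. Then the approximate error exponent equals the minimum of the edge weights over pairs of adjacent edges: K̃(T,ρ) = min over unordered pairs {f,g} of distinct adjacent edges of T of W(ρ_f, ρ_g). -/

import Mathlib

noncomputable def Jt (a b : ℝ) : ℝ :=
  ((1 / 2) * Real.log ((1 - b ^ 2) / (1 - a ^ 2))) ^ 2 /
    (2 * (b ^ 4 + b ^ 2) / (1 - b ^ 2) ^ 2 + 2 * (a ^ 4 + a ^ 2) / (1 - a ^ 2) ^ 2
      - 4 * b ^ 2 * (a ^ 2 + 1) / ((1 - b ^ 2) * (1 - a ^ 2)))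

noncomputable def W (a b : ℝ) : ℝ := min (Jt a (a * b)) (Jt b (a * b))

/-- The approximate error exponent K̃(G,ρ): the infimum of J̃(ρ_e, ρ_{e′}) over all
non-edges e′ = {u,v} and all edges e on the (unique) path joining u and v, where the
correlation of the non-edge is the product of the edge correlations along that path. -/
noncomputable def Ktilde {V : Type*} (G : SimpleGraph V) (ρ : Sym2 V → ℝ) : ℝ :=
  sInf { x : ℝ | ∃ (u v : V) (p : G.Walk u v), p.IsPath ∧ u ≠ v ∧ ¬ G.Adj u v ∧
    ∃ e ∈ p.edges, x = Jt (ρ e) ((p.edges.map ρ).prod) }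

/-! ### Auxiliary analytic lemmas -/

/-- The reparametrized crossover rate. -/
noncomputable def Ff (q x : ℝ) : ℝ :=
  (Real.log (1 + q) - Real.log (1 + x)) ^ 2 / (4 * (q - x) ^ 2 + 2 * (q - x))

lemma Jt_eq {a y : ℝ} (ha : a ^ 2 < 1) (hy : y ^ 2 < 1) :
    Jt a y = Ff (a ^ 2 / (1 - a ^ 2)) (y ^ 2 / (1 - y ^ 2)) / 4 := by
  have ha0 : (0:ℝ) < 1 - a ^ 2 := by linarith
  have hy0 : (0:ℝ) < 1 - y ^ 2 := by linarith
  set q := a ^ 2 / (1 - a ^ 2) with hq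
  set p := y ^ 2 / (1 - y ^ 2) with hp
  have e1 : (1:ℝ) + q = 1 / (1 - a ^ 2) := by rw [hq]; field_simp; ring
  have e2 : (1:ℝ) + p = 1 / (1 - y ^ 2) := by rw [hp]; field_simp; ring
  have hL : Real.log ((1 - y ^ 2) / (1 - a ^ 2)) = Real.log (1 + q) - Real.log (1 + p) := by
    rw [e1, e2, Real.log_div (by positivity) (by positivity)]
    rw [one_div, one_div, Real.log_inv, Real.log_inv]; ring
  have hB : 2 * (y ^ 4 + y ^ 2) / (1 - y ^ 2) ^ 2 + 2 * (a ^ 4 + a ^ 2) / (1 - a ^ 2) ^ 2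
      - 4 * y ^ 2 * (a ^ 2 + 1) / ((1 - y ^ 2) * (1 - a ^ 2))
      = 4 * (q - p) ^ 2 + 2 * (q - p) := by
    rw [hq, hp]; field_simp; ring
  rw [Jt, Ff, hL, hB]
  ring

lemma Ff_hasDerivAt {q p : ℝ} (hp : 0 ≤ p) (hpq : p < q) :
    HasDerivAt (Ff q)
      (((2 * (Real.log (1 + q) - Real.log (1 + p)) ^ 1 * (0 - (1 / (1 + p))))
          * (4 * (q - p) ^ 2 + 2 * (q - p))
        - (Real.log (1 + q) - Real.log (1 + p)) ^ 2
          * (4 * (2 * (q - p) ^ 1 * (0 - 1)) + 2 * (0 - 1)))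
        / (4 * (q - p) ^ 2 + 2 * (q - p)) ^ 2) p := by
  have h1p : (0:ℝ) < 1 + p := by linarith
  have ht : (0:ℝ) < q - p := by linarith
  have hv : (4 * (q - p) ^ 2 + 2 * (q - p)) ≠ 0 := by positivity
  have hlog : HasDerivAt (fun x : ℝ => Real.log (1 + x)) (1 / (1 + p)) p := by
    have := (Real.hasDerivAt_log (ne_of_gt h1p)).comp p ((hasDerivAt_id p).const_add 1)
    simpa [Function.comp_def] using this
  have hu : HasDerivAt (fun x : ℝ => (Real.log (1 + q) - Real.log (1 + x)) ^ 2)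
      (2 * (Real.log (1 + q) - Real.log (1 + p)) ^ 1 * (0 - (1 / (1 + p)))) p :=
    ((hasDerivAt_const p (Real.log (1 + q))).sub hlog).pow 2
  have hw : HasDerivAt (fun x : ℝ => 4 * (q - x) ^ 2 + 2 * (q - x))
      (4 * (2 * (q - p) ^ 1 * (0 - 1)) + 2 * (0 - 1)) p := by
    have hqx : HasDerivAt (fun x : ℝ => q - x) (0 - 1) p :=
      (hasDerivAt_const p q).sub (hasDerivAt_id p)
    exact ((hqx.pow 2).const_mul 4).add (hqx.const_mul 2)
  exact hu.div hw hv

lemma Ff_strictAntiOn {q : ℝ} (hq : 0 < q) : StrictAntiOn (Ff q) (Set.Ico 0 q) := by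
  apply strictAntiOn_of_deriv_neg (convex_Ico 0 q)
  · apply ContinuousOn.div
    · apply ContinuousOn.pow
      apply ContinuousOn.sub continuousOn_const
      intro x hx
      have : (0:ℝ) < 1 + x := by have := hx.1; linarith
      exact ((Real.continuousAt_log (ne_of_gt this)).comp
        ((continuous_const.add continuous_id).continuousAt)).continuousWithinAt
    · exact (continuousOn_const.mul ((continuousOn_const.sub continuousOn_id).pow 2)).add
        (continuousOn_const.mul (continuousOn_const.sub continuousOn_id))
    · intro x hx
      have : (0:ℝ) < q - x := by have := hx.2; linarith
      positivity
  · intro p hp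
    rw [interior_Ico] at hp
    obtain ⟨hp0, hpq⟩ := hp
    rw [(Ff_hasDerivAt (le_of_lt hp0) hpq).deriv]
    have h1p : (0:ℝ) < 1 + p := by linarith
    have ht : (0:ℝ) < q - p := by linarith
    set L := Real.log (1 + q) - Real.log (1 + p) with hL
    have hLpos : 0 < L := by
      rw [hL]
      have := Real.log_lt_log (by linarith) (show (1:ℝ) + p < 1 + q by linarith)
      linarith
    have hLle : L ≤ (q - p) / (1 + p) := by
      rw [hL, ← Real.log_div (by positivity) (ne_of_gt h1p)]
      have := Real.log_le_sub_one_of_pos (show (0:ℝ) < (1 + q) / (1 + p) by positivity)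
      have heq : (1 + q) / (1 + p) - 1 = (q - p) / (1 + p) := by field_simp; ring
      linarith [heq ▸ this]
    apply div_neg_of_neg_of_pos
    · have key : L * (8 * (q - p) + 2) < 2 * (4 * (q - p) ^ 2 + 2 * (q - p)) / (1 + p) := by
        have h1 : L * (8 * (q - p) + 2) ≤ (q - p) / (1 + p) * (8 * (q - p) + 2) := by
          apply mul_le_mul_of_nonneg_right hLle
          nlinarith
        have h2 : (q - p) / (1 + p) * (8 * (q - p) + 2)
            < 2 * (4 * (q - p) ^ 2 + 2 * (q - p)) / (1 + p) := by
          rw [div_mul_eq_mul_div, div_lt_div_iff₀ h1p h1p]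
          nlinarith
        linarith
      have expand : 2 * L ^ 1 * (0 - 1 / (1 + p)) * (4 * (q - p) ^ 2 + 2 * (q - p))
          - L ^ 2 * (4 * (2 * (q - p) ^ 1 * (0 - 1)) + 2 * (0 - 1))
          = L * (L * (8 * (q - p) + 2) - 2 * (4 * (q - p) ^ 2 + 2 * (q - p)) / (1 + p)) := by
        field_simp
        ring
      rw [expand]
      apply mul_neg_of_pos_of_neg hLpos
      linarith
    · positivity

lemma ratio_lt {x y : ℝ} (hx : 0 ≤ x) (hxy : x < y) (hy : y < 1) :
    x / (1 - x) < y / (1 - y) := by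
  rw [div_lt_div_iff₀ (by linarith) (by linarith)]
  nlinarith

lemma Jt_anti {a b c : ℝ} (ha1 : a ^ 2 < 1) (hbc : b ^ 2 ≤ c ^ 2) (hca : c ^ 2 < a ^ 2) :
    Jt a c ≤ Jt a b := by
  have hc1 : c ^ 2 < 1 := lt_trans hca ha1
  have hb1 : b ^ 2 < 1 := lt_of_le_of_lt hbc hc1
  have hq0 : 0 < a ^ 2 / (1 - a ^ 2) := by
    have h1 : 0 < a ^ 2 := lt_of_le_of_lt (sq_nonneg c) hca
    have h2 : (0:ℝ) < 1 - a ^ 2 := by linarith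
    positivity
  have hpc : c ^ 2 / (1 - c ^ 2) < a ^ 2 / (1 - a ^ 2) := ratio_lt (sq_nonneg c) hca ha1
  have hpb : b ^ 2 / (1 - b ^ 2) ≤ c ^ 2 / (1 - c ^ 2) := by
    rcases eq_or_lt_of_le hbc with h | h
    · rw [h]
    · exact le_of_lt (ratio_lt (sq_nonneg b) h hc1)
  rw [Jt_eq ha1 hc1, Jt_eq ha1 hb1]
  have hmb : b ^ 2 / (1 - b ^ 2) ∈ Set.Ico 0 (a ^ 2 / (1 - a ^ 2)) := by
    constructor
    · have : (0:ℝ) < 1 - b ^ 2 := by linarith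
      positivity
    · exact lt_of_le_of_lt hpb hpc
  have hmc : c ^ 2 / (1 - c ^ 2) ∈ Set.Ico 0 (a ^ 2 / (1 - a ^ 2)) :=
    ⟨by have : (0:ℝ) < 1 - c ^ 2 := by linarith
        positivity, hpc⟩
  rcases eq_or_lt_of_le hpb with h | h
  · rw [h]
  · have := Ff_strictAntiOn hq0 hmb hmc h
    linarith

lemma Jt_nonneg {a b : ℝ} (ha1 : a ^ 2 < 1) (hba : b ^ 2 < a ^ 2) : 0 ≤ Jt a b := by
  have hb1 : b ^ 2 < 1 := lt_trans hba ha1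
  rw [Jt_eq ha1 hb1]
  have hpb : b ^ 2 / (1 - b ^ 2) < a ^ 2 / (1 - a ^ 2) := ratio_lt (sq_nonneg b) hba ha1
  rw [Ff]
  have ht : (0:ℝ) < a ^ 2 / (1 - a ^ 2) - b ^ 2 / (1 - b ^ 2) := by linarith
  have : (0:ℝ) < 4 * (a ^ 2 / (1 - a ^ 2) - b ^ 2 / (1 - b ^ 2)) ^ 2
      + 2 * (a ^ 2 / (1 - a ^ 2) - b ^ 2 / (1 - b ^ 2)) := by positivity
  positivity

/-! ### Auxiliary graph lemmas -/

open SimpleGraph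

lemma abs_prod_le {α : Type*} (ρ : α → ℝ) (l : List α) (h : ∀ f ∈ l, |ρ f| ≤ 1) :
    |(l.map ρ).prod| ≤ 1 := by
  induction l with
  | nil => simp
  | cons a t ih =>
    simp only [List.map_cons, List.prod_cons, abs_mul]
    have h1 := h a (List.mem_cons_self)
    have h2 := ih (fun f hf => h f (List.mem_cons_of_mem a hf))
    nlinarith [abs_nonneg (ρ a), abs_nonneg ((t.map ρ).prod)]

lemma walk_decomp {V : Type*} {G : SimpleGraph V} (ρ : Sym2 V → ℝ)
    (hρ1 : ∀ f ∈ G.edgeSet, |ρ f| ≤ 1) :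
    ∀ {u v : V} (p : G.Walk u v), p.IsTrail → 2 ≤ p.length → ∀ {e : Sym2 V}, e ∈ p.edges →
    ∃ e', e' ∈ p.edges ∧ e' ≠ e ∧ (∃ x, x ∈ e ∧ x ∈ e') ∧
      ∃ m : ℝ, (p.edges.map ρ).prod = ρ e * ρ e' * m ∧ |m| ≤ 1 := by
  intro u v p
  induction p with
  | nil => intro _ h2; simp at h2
  | @cons u w v h q ih =>
    intro ht h2 e he
    cases q with
    | nil => simp [Walk.length_cons] at h2
    | @cons w x v h' r =>
      by_cases her : e ∈ r.edges
      · have h2' : 2 ≤ (Walk.cons h' r).length := by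
          have hne : r.edges ≠ [] := List.ne_nil_of_mem her
          have : 1 ≤ r.length := by
            rcases Nat.eq_zero_or_pos r.length with h0 | h0
            · exfalso; apply hne
              have := r.length_edges
              rw [h0] at this
              exact List.length_eq_zero_iff.mp this
            · exact h0
          simp [Walk.length_cons]; omega
        obtain ⟨e', he', hne, hsh, m, hm, hm1⟩ :=
          ih ht.of_cons h2' (e := e) (by rw [Walk.edges_cons]; exact List.mem_cons_of_mem _ her)
        refine ⟨e', by rw [Walk.edges_cons]; exact List.mem_cons_of_mem _ he', hne, hsh,
          ρ s(u, w) * m, ?_, ?_⟩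
        · rw [Walk.edges_cons, List.map_cons, List.prod_cons, hm]; ring
        · rw [abs_mul]
          have ha := hρ1 s(u, w) (G.mem_edgeSet.mpr h)
          nlinarith [abs_nonneg (ρ s(u,w)), abs_nonneg m]
      · have hnodup := ht.edges_nodup
        simp only [Walk.edges_cons, List.nodup_cons, List.mem_cons] at hnodup
        have hm1 : |(r.edges.map ρ).prod| ≤ 1 := by
          apply abs_prod_le
          intro f hf
          exact hρ1 f ((Walk.cons h (Walk.cons h' r)).edges_subset_edgeSet
            (by rw [Walk.edges_cons, Walk.edges_cons]
                exact List.mem_cons_of_mem _ (List.mem_cons_of_mem _ hf)))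
        have he' : e = s(u, w) ∨ e = s(w, x) := by
          simp only [Walk.edges_cons, List.mem_cons] at he
          rcases he with h1 | h1 | h1
          · exact Or.inl h1
          · exact Or.inr h1
          · exact absurd h1 her
        rcases he' with rfl | rfl
        · refine ⟨s(w, x), by simp, ?_, ⟨w, by simp, by simp⟩,
            (r.edges.map ρ).prod, ?_, hm1⟩
          · intro hcon
            exact hnodup.1 (Or.inl hcon.symm)
          · simp [Walk.edges_cons, List.prod_cons]; ring
        · refine ⟨s(u, w), by simp, ?_, ⟨w, by simp, by simp⟩,
            (r.edges.map ρ).prod, ?_, hm1⟩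
          · intro hcon
            exact hnodup.1 (Or.inl hcon)
          · simp [Walk.edges_cons, List.prod_cons]; ring

lemma two_le_length {V : Type*} {G : SimpleGraph V} {u v : V} (p : G.Walk u v)
    (h1 : u ≠ v) (h2 : ¬ G.Adj u v) : 2 ≤ p.length := by
  cases p with
  | nil => exact absurd rfl h1
  | cons h q =>
    cases q with
    | nil => exact absurd h h2
    | cons h' r => simp [Walk.length_cons]

lemma not_adj_of_two_path {V : Type*} {G : SimpleGraph V} (hG : G.IsTree)
    {u v w : V} (huv : G.Adj u v) (hvw : G.Adj v w) (huw : u ≠ w) : ¬ G.Adj u w := by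
  intro hadj
  have hp1 : (Walk.cons hadj Walk.nil : G.Walk u w).IsPath := by
    rw [Walk.cons_isPath_iff]
    exact ⟨Walk.IsPath.nil, by simp [huw]⟩
  have hp2 : (Walk.cons huv (Walk.cons hvw Walk.nil) : G.Walk u w).IsPath := by
    rw [Walk.cons_isPath_iff, Walk.cons_isPath_iff]
    refine ⟨⟨Walk.IsPath.nil, by simp [hvw.ne]⟩, ?_⟩
    simp [huv.ne, huw]
  have := (hG.existsUnique_path u w).unique hp1 hp2
  have hlen := congrArg Walk.length this
  simp [Walk.length_cons] at hlen

lemma exists_adjacent_pair {V : Type*} [Fintype V] (hd : 3 ≤ Fintype.card V)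
    {G : SimpleGraph V} (hG : G.IsTree) :
    ∃ (v u w : V), u ≠ w ∧ G.Adj u v ∧ G.Adj v w := by
  classical
  have hcard := hG.card_edgeFinset
  have hsum := G.sum_degrees_eq_twice_card_edges
  have hdeg : ∃ v, 2 ≤ G.degree v := by
    by_contra hcon
    push_neg at hcon
    have : ∑ v, G.degree v ≤ ∑ _v : V, 1 :=
      Finset.sum_le_sum fun v _ => Nat.lt_succ_iff.mp (hcon v)
    simp only [Finset.sum_const, Finset.card_univ, smul_eq_mul, mul_one] at this
    omega
  obtain ⟨v, hv⟩ := hdeg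
  rw [← G.card_neighborFinset_eq_degree] at hv
  obtain ⟨u, hu, w, hw, huw⟩ := Finset.one_lt_card.mp hv
  rw [SimpleGraph.mem_neighborFinset] at hu hw
  exact ⟨v, u, w, huw, hu.symm, hw⟩

/-! ### Main theorem -/

/-- For a tree on at least 3 vertices, the approximate error exponent equals the minimum of
the edge weights W over all unordered pairs of distinct adjacent edges. -/
theorem Ktilde_eq_min_adjacent {V : Type*} [Fintype V] (hd : 3 ≤ Fintype.card V)
    (G : SimpleGraph V) (hG : G.IsTree) (ρ : Sym2 V → ℝ)
    (hρ : ∀ e ∈ G.edgeSet, ρ e ∈ Set.Ioo (-1 : ℝ) 1 ∧ ρ e ≠ 0) :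
    Ktilde G ρ = sInf { x : ℝ | ∃ f g : Sym2 V, f ∈ G.edgeSet ∧ g ∈ G.edgeSet ∧ f ≠ g ∧
      (∃ v : V, v ∈ f ∧ v ∈ g) ∧ x = W (ρ f) (ρ g) } := by
  classical
  have hsq : ∀ f ∈ G.edgeSet, (ρ f) ^ 2 < 1 ∧ ρ f ≠ 0 := by
    intro f hf
    obtain ⟨⟨h1, h2⟩, h3⟩ := hρ f hf
    exact ⟨by nlinarith, h3⟩
  have habs : ∀ f ∈ G.edgeSet, |ρ f| ≤ 1 := by
    intro f hf
    obtain ⟨⟨h1, h2⟩, _⟩ := hρ f hf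
    rw [abs_le]; constructor <;> linarith
  set SL := { x : ℝ | ∃ (u v : V) (p : G.Walk u v), p.IsPath ∧ u ≠ v ∧ ¬ G.Adj u v ∧
    ∃ e ∈ p.edges, x = Jt (ρ e) ((p.edges.map ρ).prod) } with hSL
  set SR := { x : ℝ | ∃ f g : Sym2 V, f ∈ G.edgeSet ∧ g ∈ G.edgeSet ∧ f ≠ g ∧
      (∃ v : V, v ∈ f ∧ v ∈ g) ∧ x = W (ρ f) (ρ g) } with hSR
  -- the key estimate
  have key : ∀ f g : Sym2 V, f ∈ G.edgeSet → g ∈ G.edgeSet → ∀ m : ℝ, |m| ≤ 1 →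
      W (ρ f) (ρ g) ≤ Jt (ρ f) (ρ f * ρ g * m) ∧ 0 ≤ Jt (ρ f) (ρ f * ρ g * m) := by
    intro f g hf hg m hm
    obtain ⟨hf2, hf0⟩ := hsq f hf
    obtain ⟨hg2, hg0⟩ := hsq g hg
    have hfpos : 0 < (ρ f) ^ 2 := by positivity
    have hgpos : 0 < (ρ g) ^ 2 := by positivity
    have hc : (ρ f * ρ g) ^ 2 < (ρ f) ^ 2 := by nlinarith
    have hm2 : m ^ 2 ≤ 1 := by nlinarith [abs_nonneg m, sq_abs m]
    have hb : (ρ f * ρ g * m) ^ 2 ≤ (ρ f * ρ g) ^ 2 := by nlinarith [sq_nonneg (ρ f * ρ g)]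
    have h1 : Jt (ρ f) (ρ f * ρ g) ≤ Jt (ρ f) (ρ f * ρ g * m) := Jt_anti hf2 hb hc
    exact ⟨le_trans (min_le_left _ _) h1, Jt_nonneg hf2 (lt_of_le_of_lt hb hc)⟩
  have hBddR : BddBelow SR := by
    refine ⟨0, fun y hy => ?_⟩
    obtain ⟨f, g, hf, hg, hfg, hsh, rfl⟩ := hy
    obtain ⟨hf2, hf0⟩ := hsq f hf
    obtain ⟨hg2, hg0⟩ := hsq g hg
    have hfpos : 0 < (ρ f) ^ 2 := by positivity
    have hgpos : 0 < (ρ g) ^ 2 := by positivity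
    have hc1 : (ρ f * ρ g) ^ 2 < (ρ f) ^ 2 := by nlinarith
    have hc2 : (ρ f * ρ g) ^ 2 < (ρ g) ^ 2 := by nlinarith
    exact le_min (Jt_nonneg hf2 hc1) (Jt_nonneg hg2 hc2)
  have hBddL : BddBelow SL := by
    refine ⟨0, fun x hx => ?_⟩
    obtain ⟨u, v, p, hp, hne, hnadj, e, he, rfl⟩ := hx
    obtain ⟨e', he', hnee, hsh, m, hm, hm1⟩ :=
      walk_decomp ρ habs p hp.isTrail (two_le_length p hne hnadj) he
    rw [hm]
    exact (key e e' (p.edges_subset_edgeSet he) (p.edges_subset_edgeSet he') m hm1).2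
  have hsub : SR ⊆ SL := by
    intro y hy
    obtain ⟨f, g, hf, hg, hfg, ⟨z, hzf, hzg⟩, rfl⟩ := hy
    obtain ⟨u, rfl⟩ := Sym2.mem_iff_exists.mp hzf
    obtain ⟨w, rfl⟩ := Sym2.mem_iff_exists.mp hzg
    have hzu : G.Adj z u := G.mem_edgeSet.mp hf
    have hzw : G.Adj z w := G.mem_edgeSet.mp hg
    have huw : u ≠ w := fun hcon => hfg (by rw [hcon])
    have hnadj : ¬ G.Adj u w := not_adj_of_two_path hG hzu.symm hzw huw
    have hpath : (Walk.cons hzu.symm (Walk.cons hzw Walk.nil) : G.Walk u w).IsPath := by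
      rw [Walk.cons_isPath_iff, Walk.cons_isPath_iff]
      refine ⟨⟨Walk.IsPath.nil, by simp [hzw.ne]⟩, ?_⟩
      simp [hzu.ne', huw]
    refine ⟨u, w, Walk.cons hzu.symm (Walk.cons hzw Walk.nil), hpath, huw, hnadj, ?_⟩
    have hedges : (Walk.cons hzu.symm (Walk.cons hzw Walk.nil) : G.Walk u w).edges
        = [s(u, z), s(z, w)] := by simp
    rcases min_cases (Jt (ρ s(z,u)) (ρ s(z,u) * ρ s(z,w))) (Jt (ρ s(z,w)) (ρ s(z,u) * ρ s(z,w)))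
      with ⟨hmin, _⟩ | ⟨hmin, _⟩
    · refine ⟨s(u, z), by rw [hedges]; simp, ?_⟩
      rw [hedges]
      simp only [List.map_cons, List.map_nil, List.prod_cons, List.prod_nil, mul_one]
      rw [Sym2.eq_swap (a := u) (b := z)]
      rw [W] at *
      rw [hmin]
    · refine ⟨s(z, w), by rw [hedges]; simp, ?_⟩
      rw [hedges]
      simp only [List.map_cons, List.map_nil, List.prod_cons, List.prod_nil, mul_one]
      rw [Sym2.eq_swap (a := u) (b := z)]
      rw [W] at *
      rw [hmin]
  have hSRne : SR.Nonempty := by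
    obtain ⟨v, u, w, huw, huv, hvw⟩ := exists_adjacent_pair hd hG
    refine ⟨W (ρ s(u, v)) (ρ s(v, w)), s(u, v), s(v, w), G.mem_edgeSet.mpr huv,
      G.mem_edgeSet.mpr hvw, ?_, ⟨v, by simp, by simp⟩, rfl⟩
    intro hcon
    rw [Sym2.eq_iff] at hcon
    rcases hcon with ⟨h1, h2⟩ | ⟨h1, h2⟩
    · exact huv.ne h1
    · exact huw h1
  have hSLne : SL.Nonempty := hSRne.mono hsub
  rw [Ktilde]
  apply le_antisymm
  · exact csInf_le_csInf hBddL hSRne hsub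
  · apply le_csInf hSLne
    intro x hx
    obtain ⟨u, v, p, hp, hne, hnadj, e, he, rfl⟩ := hx
    obtain ⟨e', he', hnee, hsh, m, hm, hm1⟩ :=
      walk_decomp ρ habs p hp.isTrail (two_le_length p hne hnadj) he
    have hemem := p.edges_subset_edgeSet he
    have he'mem := p.edges_subset_edgeSet he'
    have hWmem : W (ρ e) (ρ e') ∈ SR :=
      ⟨e, e', hemem, he'mem, hnee.symm, hsh, rfl⟩
    calc sInf SR ≤ W (ρ e) (ρ e') := csInf_le hBddR hWmem
    _ ≤ Jt (ρ e) ((p.edges.map ρ).prod) := by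
        rw [hm]; exact (key e e' hemem he'mem m hm1).1
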